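/- Under the recognition setup (conditions (1)–(5)), for all a ≠ b in I and all v ∈ B: e_a^⋆ v ≠ 0 if and only if e_a^⋆ f_b v ≠ 0, and whenever e_a^⋆ v ≠ 0 one has f_b e_a^⋆ v = e_a^⋆ f_b v. -/

import Mathlib

/-! Abstract crystals for generalized Kac–Moody (Borcherds) algebras. -/

/-- A Borcherds–Cartan matrix: integer matrix with `A a a = 2` or `A a a` nonpositive even,
nonpositive off-diagonal entries, and `A a b = 0 ↔ A b a = 0`. -/
structure IsBorcherdsCartan {I : Type*} (A : I → I → ℤ) : Prop where
  diag : ∀ a, A a a = 2 ∨ (A a a ≤ 0 ∧ Even (A a a))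
  offdiag : ∀ a b, a ≠ b → A a b ≤ 0
  zero_iff : ∀ a b, A a b = 0 ↔ A b a = 0

/-- The data of a crystal structure on a set `B`: partial operators `e`, `f`,
string functions `eps`, `phi` valued in `ℤ ∪ {-∞}`, and a weight function valued in the
root lattice `Q = ⊕_{a ∈ I} ℤ α_a`, modelled as `I →₀ ℤ` (so `α_a = Finsupp.single a 1`). -/
structure CrystalStructure (I B : Type*) where
  e : I → B → Option B
  f : I → B → Option B
  eps : I → B → WithBot ℤ
  phi : I → B → WithBot ℤ
  wt : B → I →₀ ℤ

variable {I B : Type*}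

/-- The pairing `⟨h_a, μ⟩` determined by `⟨h_a, α_b⟩ = A a b`. -/
def pairing (A : I → I → ℤ) (a : I) (μ : I →₀ ℤ) : ℤ :=
  μ.sum fun b m => A a b * m

/-- The axioms of an abstract `U_q(g)`-crystal for a Borcherds–Cartan matrix `A`. -/
def IsAbstractCrystal (A : I → I → ℤ) (C : CrystalStructure I B) : Prop :=
  (∀ a v w, C.e a v = some w → C.wt w = C.wt v + Finsupp.single a 1) ∧
  (∀ a v w, C.f a v = some w → C.wt w = C.wt v - Finsupp.single a 1) ∧
  (∀ a v, C.phi a v = C.eps a v + ((pairing A a (C.wt v) : ℤ) : WithBot ℤ)) ∧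
  (∀ a v w, C.f a v = some w ↔ C.e a w = some v) ∧
  (∀ a v w, C.e a v = some w →
    (A a a = 2 → C.eps a w + 1 = C.eps a v ∧ C.phi a w = C.phi a v + 1) ∧
    (A a a ≤ 0 → C.eps a w = C.eps a v ∧ C.phi a w = C.phi a v + ((A a a : ℤ) : WithBot ℤ))) ∧
  (∀ a v w, C.f a v = some w →
    (A a a = 2 → C.eps a w = C.eps a v + 1 ∧ C.phi a w + 1 = C.phi a v) ∧
    (A a a ≤ 0 → C.eps a w = C.eps a v ∧ C.phi a w + ((A a a : ℤ) : WithBot ℤ) = C.phi a v)) ∧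
  (∀ a v, C.phi a v = ⊥ → C.e a v = none ∧ C.f a v = none)

/-- One step in the crystal graph. -/
def CrystalStep (C : CrystalStructure I B) (v w : B) : Prop :=
  ∃ a, C.e a v = some w ∨ C.f a v = some w

/-- A crystal is connected if any two elements are joined by a chain of crystal operators. -/
def CrystalConnected (C : CrystalStructure I B) : Prop :=
  ∀ v w, Relation.ReflTransGen (CrystalStep C) v w

/-- Iteration of a partial map. -/
def iterOpt {α : Type*} (g : α → Option α) : ℕ → α → Option α
  | 0, v => some v
  | k + 1, v => (iterOpt g k v).bind g

/-- `κ_a(v)`, defined from the two crystal structures via the maximal numbers of times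
the operators `e_a` resp. `e_a^⋆` can be applied (`te`, `teS`). -/
def kappaFun (A : I → I → ℤ) (C : CrystalStructure I B) (te teS : I → B → ℕ) (a : I) (v : B) : ℤ :=
  if A a a = 2 then (te a v : ℤ) + (teS a v : ℤ) + pairing A a (C.wt v)
  else 0 + (teS a v : ℤ) * A a a + pairing A a (C.wt v)


private lemma ene_of_iter {α : Type*} (g : α → Option α) :
    ∀ k v, iterOpt g (k+1) v ≠ none → g v ≠ none := by
  intro k
  induction k with
  | zero => intro v h; simpa [iterOpt] using h
  | succ k ih =>
    intro v h
    refine ih v ?_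
    intro hn
    apply h
    show (iterOpt g (k + 1) v).bind g = none
    rw [hn]; rfl

/-- Under the recognition setup, for `a ≠ b`: `e_a^⋆ v ≠ 0` iff `e_a^⋆ f_b v ≠ 0`, and
whenever `e_a^⋆ v ≠ 0` one has `f_b e_a^⋆ v = e_a^⋆ f_b v`. -/
theorem recognition_estar_f_commute
    {I B : Type*} (A : I → I → ℤ) (hA : IsBorcherdsCartan A)
    (C S : CrystalStructure I B)
    (hC : IsAbstractCrystal A C) (hS : IsAbstractCrystal A S)
    (hwt : S.wt = C.wt)
    (hconnC : CrystalConnected C) (hconnS : CrystalConnected S)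
    (v0 : B)
    (hv0C : ∀ a, C.e a v0 = none) (hv0S : ∀ a, S.e a v0 = none)
    (hwt0 : C.wt v0 = 0) (huniq : ∀ v, C.wt v = 0 → v = v0)
    (te teS : I → B → ℕ)
    (hte : ∀ a v, iterOpt (C.e a) (te a v) v ≠ none ∧ iterOpt (C.e a) (te a v + 1) v = none)
    (hteS : ∀ a v, iterOpt (S.e a) (teS a v) v ≠ none ∧ iterOpt (S.e a) (teS a v + 1) v = none)
    (heps : ∀ a v, (A a a = 2 → C.eps a v = ((te a v : ℤ) : WithBot ℤ)) ∧
      (A a a ≤ 0 → C.eps a v = 0))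
    (hepsS : ∀ a v, (A a a = 2 → S.eps a v = ((teS a v : ℤ) : WithBot ℤ)) ∧
      (A a a ≤ 0 → S.eps a v = 0))
    (h1 : ∀ a v, C.f a v ≠ none ∧ S.f a v ≠ none)
    (h2 : ∀ a b, a ≠ b → ∀ v, (C.f b v).bind (S.f a) = (S.f a v).bind (C.f b)
      ∧ (∀ w, C.f b v = some w → teS a w = teS a v)
      ∧ (∀ w, S.f a v = some w → te b w = te b v))
    (h3 : ∀ a v, kappaFun A C te teS a v = 0 → C.f a v = S.f a v)
    (h4 : ∀ a v, A a a = 2 → 0 ≤ kappaFun A C te teS a v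
      ∧ (1 ≤ kappaFun A C te teS a v →
          (∀ w, C.f a v = some w → S.eps a w = S.eps a v) ∧
          (∀ w, S.f a v = some w → C.eps a w = C.eps a v))
      ∧ (2 ≤ kappaFun A C te teS a v → (C.f a v).bind (S.f a) = (S.f a v).bind (C.f a)))
    (h5 : ∀ a v, A a a ≤ 0 → 0 < kappaFun A C te teS a v →
      (∀ w, C.f a v = some w → teS a w = teS a v) ∧
      (C.f a v).bind (S.f a) = (S.f a v).bind (C.f a)) :
    ∀ a b, a ≠ b → ∀ v : B,
      (S.e a v ≠ none ↔ (C.f b v).bind (S.e a) ≠ none) ∧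
      (S.e a v ≠ none → (S.e a v).bind (C.f b) = (C.f b v).bind (S.e a)) := by
  intro a b hab v
  obtain ⟨hcom, hteSeq, -⟩ := h2 a b hab v
  obtain ⟨w, hw⟩ := Option.ne_none_iff_exists'.mp (h1 b v).1
  have hteSw : teS a w = teS a v := hteSeq w hw
  have key : ∀ u : B, S.e a u ≠ none ↔ 1 ≤ teS a u := by
    intro u
    constructor
    · intro h
      by_contra hlt
      have h0 : teS a u = 0 := by omega
      have h2' := (hteS a u).2
      rw [h0] at h2'
      simp only [iterOpt, Option.bind_eq_none', Option.bind_some] at h2'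
      exact h (by simpa [iterOpt] using h2')
    · intro h
      have hne := (hteS a u).1
      obtain ⟨k, hk⟩ : ∃ k, teS a u = k + 1 := ⟨teS a u - 1, by omega⟩
      rw [hk] at hne
      exact ene_of_iter (S.e a) k u hne
  constructor
  · rw [hw]
    simp only [Option.bind_some]
    rw [key v, key w, hteSw]
  · intro hne
    obtain ⟨u, hu⟩ := Option.ne_none_iff_exists'.mp hne
    have hfu : S.f a u = some v := (hS.2.2.2.1 a u v).mpr hu
    obtain ⟨hcomu, -, -⟩ := h2 a b hab u
    obtain ⟨u', hu'⟩ := Option.ne_none_iff_exists'.mp (h1 b u).1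
    rw [hu', hfu] at hcomu
    simp only [Option.bind_some] at hcomu
    rw [hw] at hcomu
    have hew : S.e a w = some u' := (hS.2.2.2.1 a u' w).mp hcomu
    rw [hu, hw]
    simp only [Option.bind_some]
    rw [hu', hew]
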